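/- If p : X → Y is a covering map with finite fibers and X is paracompact (and Hausdorff), then p is an overlay. -/

import Mathlib

open Set Pointwise

/-- `p` restricts to a homeomorphism of `U ⊆ X` onto `V ⊆ Y`. -/
def RestrictsToHomeo {X Y : Type*} [TopologicalSpace X] [TopologicalSpace Y]
    (p : X → Y) (U : Set X) (V : Set Y) : Prop :=
  ∃ e : U ≃ₜ V, ∀ u : U, (e u : Y) = p u

/-- A **slice** of `p : X → Y`: an open set `U ⊆ X` such that `p ⁻¹' (p '' U)` is a
disjoint union of open sets, one of which is `U`, each mapped by `p` homeomorphically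
onto `p '' U`. -/
def IsSlice {X Y : Type*} [TopologicalSpace X] [TopologicalSpace Y]
    (p : X → Y) (U : Set X) : Prop :=
  IsOpen U ∧ ∃ D : Set (Set X), U ∈ D ∧ (∀ W ∈ D, IsOpen W) ∧
    D.PairwiseDisjoint id ∧ ⋃₀ D = p ⁻¹' (p '' U) ∧
    ∀ W ∈ D, RestrictsToHomeo p W (p '' U)

/-- A **covering structure** of `p : X → Y`: an open cover `S` of `X` by slices of `p`
such that for each `U ∈ S`, `p ⁻¹' (p '' U)` is a disjoint union of elements of `S`,
each with image `p '' U`. -/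
def IsCoveringStructure {X Y : Type*} [TopologicalSpace X] [TopologicalSpace Y]
    (p : X → Y) (S : Set (Set X)) : Prop :=
  (∀ U ∈ S, IsSlice p U) ∧ ⋃₀ S = Set.univ ∧
    ∀ U ∈ S, ∃ D ⊆ S, D.PairwiseDisjoint id ∧ ⋃₀ D = p ⁻¹' (p '' U) ∧
      ∀ W ∈ D, p '' W = p '' U

/-- The **star** of a point `x` with respect to a family `S` of subsets. -/
def st {X : Type*} (x : X) (S : Set (Set X)) : Set X := ⋃₀ {U | U ∈ S ∧ x ∈ U}

/-- An **overlay structure** of `p : X → Y`: a covering structure `S` such that for every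
`x ∈ X` the star `st x S` is a slice of `p`. -/
def IsOverlayStructure {X Y : Type*} [TopologicalSpace X] [TopologicalSpace Y]
    (p : X → Y) (S : Set (Set X)) : Prop :=
  IsCoveringStructure p S ∧ ∀ x : X, IsSlice p (st x S)

/-- `p` is an **overlay** if it admits an overlay structure. -/
def IsOverlay {X Y : Type*} [TopologicalSpace X] [TopologicalSpace Y]
    (p : X → Y) : Prop :=
  ∃ S : Set (Set X), IsOverlayStructure p S

section Helpers

variable {X Y : Type*} [TopologicalSpace X] [TopologicalSpace Y] {p : X → Y}

/-- A continuous open map that is injective on an open set `T` restricts to a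
homeomorphism of `T` onto `p '' T`. -/
lemma restrictsToHomeo_image (hc : Continuous p) (ho : IsOpenMap p)
    {T : Set X} (hT : IsOpen T) (hinj : Set.InjOn p T) :
    RestrictsToHomeo p T (p '' T) := by
  classical
  have hmem : ∀ u : T, p u ∈ p '' T := fun u => ⟨u, u.2, rfl⟩
  set f : T → (p '' T : Set Y) := fun u => ⟨p u, hmem u⟩ with hf
  have hfinj : Function.Injective f := by
    intro u v huv
    exact Subtype.ext (hinj u.2 v.2 (congrArg Subtype.val huv))
  have hfsurj : Function.Surjective f := by
    rintro ⟨y, u, hu, rfl⟩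
    exact ⟨⟨u, hu⟩, rfl⟩
  have hcont : Continuous f :=
    Continuous.subtype_mk (hc.comp continuous_subtype_val) _
  have hopen : IsOpenMap f := by
    intro s hs
    have hvs : IsOpen (Subtype.val '' s : Set X) := hT.isOpenMap_subtype_val s hs
    have himeq : f '' s = Subtype.val ⁻¹' (p '' (Subtype.val '' s)) := by
      ext w
      constructor
      · rintro ⟨u, hu, rfl⟩
        exact ⟨u, ⟨u, hu, rfl⟩, rfl⟩
      · rintro ⟨x, ⟨u, hu, rfl⟩, hpx⟩
        exact ⟨u, hu, Subtype.ext hpx⟩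
    rw [himeq]
    exact (ho _ hvs).preimage continuous_subtype_val
  exact ⟨Equiv.toHomeomorphOfContinuousOpen (Equiv.ofBijective f ⟨hfinj, hfsurj⟩) hcont hopen,
    fun u => rfl⟩

lemma restrictsToHomeo_of_image_eq (hc : Continuous p) (ho : IsOpenMap p)
    {T : Set X} {V : Set Y} (hT : IsOpen T) (hinj : Set.InjOn p T)
    (him : p '' T = V) : RestrictsToHomeo p T V :=
  him ▸ restrictsToHomeo_image hc ho hT hinj

/-- A criterion for being a slice: `A` is the trace on one sheet of a complete family of
sheets over an open set `E`, and `p '' A ⊆ E`. -/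
lemma isSlice_mk (hc : Continuous p) (ho : IsOpenMap p)
    {ι : Type*} (T : ι → Set X) (E : Set Y)
    (hTopen : ∀ i, IsOpen (T i)) (hTinj : ∀ i, Set.InjOn p (T i))
    (hTim : ∀ i, p '' T i = E)
    (hTdisj : ∀ i j, i ≠ j → Disjoint (T i) (T j))
    (hTun : (⋃ i, T i) = p ⁻¹' E)
    {A : Set X} (hA : IsOpen A) (i₀ : ι)
    (hfull : A = T i₀ ∩ p ⁻¹' (p '' A)) (hAE : p '' A ⊆ E) :
    IsSlice p A := by
  have himW : ∀ i, p '' (T i ∩ p ⁻¹' (p '' A)) = p '' A := by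
    intro i
    apply subset_antisymm
    · rintro y ⟨x, ⟨_, hxA⟩, rfl⟩
      exact hxA
    · intro y hy
      obtain ⟨x, hxT, hpx⟩ : y ∈ p '' T i := (hTim i).symm ▸ hAE hy
      exact ⟨x, ⟨hxT, by simpa [Set.mem_preimage, hpx] using hy⟩, hpx⟩
  refine ⟨hA, {W | ∃ i, W = T i ∩ p ⁻¹' (p '' A)}, ⟨i₀, hfull⟩, ?_, ?_, ?_, ?_⟩
  · rintro W ⟨i, rfl⟩
    exact (hTopen i).inter ((ho A hA).preimage hc)
  · rintro W ⟨i, rfl⟩ W' ⟨i', rfl⟩ hne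
    have hii : i ≠ i' := fun h => hne (by rw [h])
    exact ((hTdisj i i' hii).mono inter_subset_left inter_subset_left)
  · apply subset_antisymm
    · rintro x ⟨W, ⟨i, rfl⟩, hxW⟩
      exact hxW.2
    · intro x hx
      have hxE : x ∈ p ⁻¹' E := hAE hx
      rw [← hTun] at hxE
      obtain ⟨_, ⟨i, rfl⟩, hxi⟩ := hxE
      exact ⟨T i ∩ p ⁻¹' (p '' A), ⟨i, rfl⟩, hxi, hx⟩
  · rintro W ⟨i, rfl⟩
    exact restrictsToHomeo_of_image_eq hc ho ((hTopen i).inter ((ho A hA).preimage hc))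
      ((hTinj i).mono inter_subset_left) (himW i)

/-- Around any point of `X`, a covering map admits a complete family of disjoint sheets
over an open neighbourhood of its image, indexed by the fiber. -/
lemma exists_block (hp : IsCoveringMap p) (z : X) :
    ∃ (E : Set Y) (T : (p ⁻¹' {p z} : Set X) → Set X),
      IsOpen E ∧ p z ∈ E ∧ (∀ i, IsOpen (T i)) ∧ (∀ i, Set.InjOn p (T i)) ∧
      (∀ i, p '' T i = E) ∧ (∀ i j, i ≠ j → Disjoint (T i) (T j)) ∧
      (⋃ i, T i) = p ⁻¹' E := by
  have hd := (hp (p z)).1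
  haveI : Nonempty (p ⁻¹' {p z}) := ⟨⟨z, rfl⟩⟩
  obtain ⟨t, ht⟩ : ∃ t : Bundle.Trivialization (p ⁻¹' {p z}) p, p z ∈ t.baseSet :=
    ⟨_, (hp (p z)).mem_toTrivialization_baseSet⟩
  haveI := hd
  refine ⟨t.baseSet, fun i => t.source ∩ (fun x => (t x).2) ⁻¹' {i},
    t.open_baseSet, ht, ?_, ?_, ?_, ?_, ?_⟩
  · intro i
    have heq : t.source ∩ (fun x => (t x).2) ⁻¹' {i}
        = t.source ∩ t ⁻¹' (univ ×ˢ ({i} : Set (p ⁻¹' {p z}))) := by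
      ext x
      simp only [Set.mem_inter_iff, Set.mem_preimage, Set.mem_singleton_iff, Set.mem_prod,
        Set.mem_univ, true_and]
    show IsOpen (t.source ∩ (fun x => (t x).2) ⁻¹' {i})
    rw [heq]
    exact t.continuousOn_toFun.isOpen_inter_preimage t.open_source
      ((isOpen_univ : IsOpen (univ : Set Y)).prod (isOpen_discrete ({i} : Set (p ⁻¹' {p z}))))
  · rintro i x ⟨hxs, hxi⟩ x' ⟨hxs', hxi'⟩ hpx
    apply t.injOn hxs hxs'
    have h1 : t x = (p x, i) := Prod.ext (t.coe_fst hxs) hxi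
    have h2 : t x' = (p x', i) := Prod.ext (t.coe_fst hxs') hxi'
    show t x = t x'
    rw [h1, h2, hpx]
  · intro i
    apply subset_antisymm
    · rintro y ⟨x, ⟨hxs, _⟩, rfl⟩
      exact t.mem_source.mp hxs
    · intro b hb
      have hbt : (b, i) ∈ t.target := t.mem_target.mpr hb
      refine ⟨t.toOpenPartialHomeomorph.symm (b, i), ⟨t.map_target hbt, ?_⟩, ?_⟩
      · show (t (t.toOpenPartialHomeomorph.symm (b, i))).2 ∈ ({i} : Set _)
        rw [t.apply_symm_apply hbt]
        rfl
      · exact t.proj_symm_apply hbt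
  · intro i j hij
    rw [Set.disjoint_left]
    rintro x ⟨_, hxi⟩ ⟨_, hxj⟩
    exact hij (by rw [← hxi, ← hxj])
  · apply subset_antisymm
    · rintro x ⟨_, ⟨i, rfl⟩, hxs, _⟩
      exact t.source_eq ▸ hxs
    · intro x hx
      have hxs : x ∈ t.source := t.source_eq ▸ hx
      exact ⟨_, ⟨(t x).2, rfl⟩, hxs, rfl⟩

end Helpers

/-- If `p : X → Y` is a covering map with finite fibers and `X` is paracompact and
Hausdorff, then `p` is an overlay. -/
theorem finite_fibered_covering_of_paracompact_is_overlay
    {X Y : Type*} [TopologicalSpace X] [TopologicalSpace Y]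
    [T2Space X] [ParacompactSpace X]
    (p : X → Y) (hp : IsCoveringMap p)
    (hfin : ∀ y : Y, (p ⁻¹' {y}).Finite) :
    IsOverlay p := by
  classical
  have hc : Continuous p := hp.continuous
  have ho : IsOpenMap p := hp.isOpenMap
  -- blocks of sheets around every point
  choose E T hEopen hEmem hTopen hTinj hTim hTdisj hTun using fun z : X => exists_block hp z
  -- a fiber point in each sheet
  have hcex : ∀ (z : X) (i : (p ⁻¹' {p z} : Set X)), ∃ x, x ∈ T z i ∧ p x = p z := by
    intro z i
    have h1 : p z ∈ p '' T z i := (hTim z i).symm ▸ hEmem z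
    obtain ⟨x, hx, hpx⟩ := h1
    exact ⟨x, hx, hpx⟩
  choose c hcT hcp using hcex
  -- the cover of X by all sheets
  set J := Σ z : X, (p ⁻¹' {p z} : Set X) with hJdef
  set O : J → Set X := fun j => T j.1 j.2 with hOdef
  have hOopen : ∀ j, IsOpen (O j) := fun j => hTopen _ _
  have hmemsheet : ∀ x : X, ∃ i, x ∈ T x i := by
    intro x
    have hx : x ∈ p ⁻¹' E x := hEmem x
    rw [← hTun x] at hx
    obtain ⟨_, ⟨i, rfl⟩, hxi⟩ := hx
    exact ⟨i, hxi⟩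
  have hOun : ⋃ j, O j = univ := by
    apply eq_univ_of_forall
    intro x
    obtain ⟨i, hi⟩ := hmemsheet x
    exact mem_iUnion.mpr ⟨⟨x, i⟩, hi⟩
  -- locally finite refinement and shrinking
  obtain ⟨G, hGopen, hGun, hGlf, hGsub⟩ := precise_refinement O hOopen hOun
  obtain ⟨V, hVun, hVopen, hVcl⟩ := exists_subset_iUnion_closure_subset isClosed_univ hGopen
    (fun x _ => hGlf.point_finite x) hGun.ge
  have hVlf : LocallyFinite V := hGlf.subset fun j => subset_closure.trans (hVcl j)
  -- the "barycentric" neighbourhoods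
  set N : X → Set X := fun w =>
    (⋂ j ∈ {j : J | w ∈ closure (V j)}, G j) ∩
      (⋃ j ∈ {j : J | w ∉ closure (V j)}, closure (V j))ᶜ with hNdef
  have hNopen : ∀ w, IsOpen (N w) := by
    intro w
    apply IsOpen.inter
    · exact Set.Finite.isOpen_biInter (hVlf.closure.point_finite w) fun j _ => hGopen j
    · rw [Set.biUnion_eq_iUnion]
      exact ((hVlf.closure.comp_injective Subtype.val_injective).isClosed_iUnion
        fun j => isClosed_closure).isOpen_compl
  have hNmem : ∀ w, w ∈ N w := by
    intro w
    constructor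
    · exact mem_biInter fun j hj => hVcl j hj
    · intro hw
      obtain ⟨s, ⟨j, rfl⟩, hs⟩ := hw
      obtain ⟨s', ⟨hj, rfl⟩, hws⟩ := hs
      exact hj hws
  have hNbary : ∀ {q w : X} {j : J}, q ∈ V j → q ∈ N w → N w ⊆ G j := by
    intro q w j hqV hqN
    by_cases hw : w ∈ closure (V j)
    · intro t ht
      exact mem_iInter₂.mp ht.1 j hw
    · exfalso
      apply hqN.2
      exact mem_biUnion hw (subset_closure hqV)
  -- the shrunk base sets
  set B : X → Set Y := fun z => E z ∩ ⋂ i, p '' (T z i ∩ N (c z i)) with hBdef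
  have hBopen : ∀ z, IsOpen (B z) := by
    intro z
    haveI : Finite (p ⁻¹' {p z} : Set X) := (hfin (p z)).to_subtype
    exact (hEopen z).inter (isOpen_iInter_of_finite fun i =>
      ho _ ((hTopen z i).inter (hNopen (c z i))))
  have hBmem : ∀ z, p z ∈ B z := fun z =>
    ⟨hEmem z, mem_iInter.mpr fun i => ⟨c z i, ⟨hcT z i, hNmem (c z i)⟩, hcp z i⟩⟩
  have hBE : ∀ z, B z ⊆ E z := fun z => inter_subset_left
  -- the members of the overlay structure
  set Λ : ∀ z : X, (p ⁻¹' {p z} : Set X) → Set X := fun z i => T z i ∩ p ⁻¹' (B z) with hΛdef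
  have hΛopen : ∀ z i, IsOpen (Λ z i) := fun z i =>
    (hTopen z i).inter ((hBopen z).preimage hc)
  have hΛim : ∀ z i, p '' Λ z i = B z := by
    intro z i
    apply subset_antisymm
    · rintro y ⟨x, ⟨_, hxB⟩, rfl⟩
      exact hxB
    · intro b hb
      obtain ⟨x, hxT, hpx⟩ : b ∈ p '' T z i := (hTim z i).symm ▸ hBE z hb
      exact ⟨x, ⟨hxT, by simpa [Set.mem_preimage, hpx] using hb⟩, hpx⟩
  have hΛsubN : ∀ z i, Λ z i ⊆ N (c z i) := by
    rintro z i x ⟨hxT, hxB⟩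
    obtain ⟨s, ⟨hsT, hsN⟩, hps⟩ := mem_iInter.mp hxB.2 i
    have : x = s := hTinj z i hxT hsT hps.symm
    rw [this]
    exact hsN
  have hΛself : ∀ x : X, ∃ i, x ∈ Λ x i := by
    intro x
    obtain ⟨i, hi⟩ := hmemsheet x
    exact ⟨i, hi, hBmem x⟩
  set S : Set (Set X) := {U : Set X | ∃ z i, U = Λ z i} with hSdef
  have hSopen : ∀ U ∈ S, IsOpen U := by
    rintro U ⟨z, i, rfl⟩
    exact hΛopen z i
  -- each member is a slice
  have hΛfull : ∀ z i, Λ z i = T z i ∩ p ⁻¹' (p '' Λ z i) := by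
    intro z i
    rw [hΛim z i]
  have hmem_slice : ∀ z i, IsSlice p (Λ z i) :=
    fun z i => isSlice_mk hc ho (T z) (E z) (hTopen z) (hTinj z) (hTim z) (hTdisj z) (hTun z)
      (hΛopen z i) i (hΛfull z i) (by rw [hΛim z i]; exact hBE z)
  refine ⟨S, ⟨⟨?_, ?_, ?_⟩, ?_⟩⟩
  · rintro U ⟨z, i, rfl⟩
    exact hmem_slice z i
  · apply eq_univ_of_forall
    intro x
    obtain ⟨i, hi⟩ := hΛself x
    exact ⟨Λ x i, ⟨x, i, rfl⟩, hi⟩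
  · rintro U ⟨z, i, rfl⟩
    refine ⟨{W : Set X | ∃ i', W = Λ z i'}, ?_, ?_, ?_, ?_⟩
    · rintro W ⟨i', rfl⟩
      exact ⟨z, i', rfl⟩
    · rintro W ⟨i', rfl⟩ W' ⟨i'', rfl⟩ hne
      have hii : i' ≠ i'' := fun h => hne (by rw [h])
      exact (hTdisj z i' i'' hii).mono inter_subset_left inter_subset_left
    · rw [hΛim z i]
      apply subset_antisymm
      · rintro x ⟨W, ⟨i', rfl⟩, _, hxB⟩
        exact hxB
      · intro x hx
        have hxE : x ∈ p ⁻¹' E z := hBE z hx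
        rw [← hTun z] at hxE
        obtain ⟨_, ⟨i', rfl⟩, hxi⟩ := hxE
        exact ⟨Λ z i', ⟨i', rfl⟩, hxi, hx⟩
    · rintro W ⟨i', rfl⟩
      rw [hΛim z i', hΛim z i]
  -- the star condition
  · intro x
    set A := st x S with hAdef
    have hAopen : IsOpen A := by
      apply isOpen_sUnion
      rintro U ⟨hUS, _⟩
      exact hSopen U hUS
    obtain ⟨j, hjV⟩ : ∃ j, x ∈ V j := mem_iUnion.mp (hVun (mem_univ x))
    have hAsub : A ⊆ T j.1 j.2 := by
      rintro t ⟨U, ⟨⟨z, i, rfl⟩, hxU⟩, htU⟩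
      have h1 : x ∈ N (c z i) := hΛsubN z i hxU
      have h2 : N (c z i) ⊆ G j := hNbary hjV h1
      exact hGsub j (h2 (hΛsubN z i htU))
    have hfull : A = T j.1 j.2 ∩ p ⁻¹' (p '' A) := by
      apply subset_antisymm
      · exact subset_inter hAsub (subset_preimage_image p A)
      · rintro t ⟨htT, a, haA, hpa⟩
        have : a = t := hTinj j.1 j.2 (hAsub haA) htT hpa
        rw [← this]
        exact haA
    have hAE : p '' A ⊆ E j.1 := by
      rw [← hTim j.1 j.2]
      exact image_mono hAsub
    exact isSlice_mk hc ho (T j.1) (E j.1) (hTopen j.1) (hTinj j.1) (hTim j.1) (hTdisj j.1)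
      (hTun j.1) hAopen j.2 hfull hAE
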